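/- Let ℬ be a doubling ball-basis. Then for any balls A ⊂ B in ℬ there exists a finite chain of balls A = A₀ ⊂ A₁ ⊂ … ⊂ Aₙ = [B] such that μ(A_{k+1}) ≤ C μ(A_k) for all k, where C depends only on the constants 𝒦 and η of the ball-basis. -/

import Mathlib

open MeasureTheory Set ENNReal NNReal

/-- A ball-basis on a measure space `(X, μ)`: a family of measurable sets of positive
finite measure satisfying conditions B1)-B4) of Karagulyan. -/
structure BallBasis (X : Type*) [MeasurableSpace X] (μ : Measure X) where
  balls : Set (Set X)
  K : ℝ≥0
  K_pos : 0 < K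
  measurableSet : ∀ B ∈ balls, MeasurableSet B
  measure_pos : ∀ B ∈ balls, 0 < μ B
  measure_lt_top : ∀ B ∈ balls, μ B < ∞
  exists_ball : ∀ x y : X, ∃ B ∈ balls, x ∈ B ∧ y ∈ B
  approx : ∀ E : Set X, MeasurableSet E → ∀ ε : ℝ≥0∞, 0 < ε →
      ∃ Bs : ℕ → Set X, (∀ k, Bs k ∈ balls) ∧ μ (symmDiff E (⋃ k, Bs k)) < ε
  hull : Set X → Set X
  hull_mem : ∀ B ∈ balls, hull B ∈ balls
  star_subset_hull : ∀ B ∈ balls,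
      (⋃₀ {A | A ∈ balls ∧ μ A ≤ 2 * μ B ∧ (A ∩ B).Nonempty}) ⊆ hull B
  measure_hull_le : ∀ B ∈ balls, μ (hull B) ≤ (K : ℝ≥0∞) * μ B

namespace BallBasis

variable {X : Type*} [MeasurableSpace X] {μ : Measure X}

/-- `B* = ⋃ {A ∈ ℬ : μ A ≤ 2 μ B, A ∩ B ≠ ∅}`. -/
def star (ℬ : BallBasis X μ) (B : Set X) : Set X :=
  ⋃₀ {A | A ∈ ℬ.balls ∧ μ A ≤ 2 * μ B ∧ (A ∩ B).Nonempty}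

/-- The doubling condition for a ball-basis, with doubling constant `η`. -/
def Doubling (ℬ : BallBasis X μ) (η : ℝ≥0) : Prop :=
  ∀ B ∈ ℬ.balls, ℬ.star B ≠ univ →
    ∃ B' ∈ ℬ.balls, B ⊂ B' ∧ μ B' ≤ (η : ℝ≥0∞) * μ B

end BallBasis

/-- Extracting an explicit finite chain from a `ReflTransGen` witness. -/
private lemma rtg_chain {α : Type*} {r : α → α → Prop} {a b : α}
    (h : Relation.ReflTransGen r a b) :
    ∃ n, ∃ f : ℕ → α, f 0 = a ∧ f n = b ∧ ∀ k < n, r (f k) (f (k + 1)) := by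
  induction h with
  | refl => exact ⟨0, fun _ => a, rfl, rfl, fun k hk => absurd hk (Nat.not_lt_zero k)⟩
  | @tail b c hab hbc ih =>
      obtain ⟨n, f, h0, hn, hstep⟩ := ih
      refine ⟨n + 1, fun k => if k ≤ n then f k else c, by simp [h0], by simp, ?_⟩
      intro k hk
      rcases lt_or_eq_of_le (Nat.lt_succ_iff.mp hk) with hlt | heq
      · have h1 : k ≤ n := hlt.le
        have h2 : k + 1 ≤ n := hlt
        simp only [h1, h2, if_pos]
        exact hstep k hlt
      · subst heq
        have h1 : k ≤ k := le_refl k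
        have h2 : ¬ (k + 1 ≤ k) := by omega
        simp only [h1, h2, if_pos, if_neg, not_false_iff, hn]
        exact hbc

/-- In a doubling ball-basis, any pair of balls `A ⊆ B` is connected by a chain of balls
`A = A₀ ⊆ A₁ ⊆ … ⊆ Aₙ = [B]` of uniformly comparable consecutive measures. -/
theorem exists_chain_of_balls {X : Type*} [MeasurableSpace X]
    {μ : Measure X} (ℬ : BallBasis X μ) {η : ℝ≥0} (hη : 1 < η) (hd : ℬ.Doubling η) :
    ∃ C : ℝ≥0, 0 < C ∧ ∀ A ∈ ℬ.balls, ∀ B ∈ ℬ.balls, A ⊆ B →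
      ∃ (n : ℕ) (Ach : ℕ → Set X), Ach 0 = A ∧ Ach n = ℬ.hull B ∧
        (∀ k ≤ n, Ach k ∈ ℬ.balls) ∧
        ∀ k < n, Ach k ⊆ Ach (k + 1) ∧ μ (Ach (k + 1)) ≤ (C : ℝ≥0∞) * μ (Ach k) := by
  classical
  set C : ℝ≥0 := 2 * (ℬ.K + η) ^ 2 with hCdef
  have hCpos : 0 < C := by
    have : (0 : ℝ) < 2 * (ℬ.K + η) ^ 2 := by
      have h1 : (0:ℝ) ≤ ℬ.K := ℬ.K.2
      have h2 : (1:ℝ) < η := hη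
      nlinarith
    have := this
    rw [hCdef]
    have hK : (0:ℝ≥0) < ℬ.K := ℬ.K_pos
    positivity
  refine ⟨C, hCpos, ?_⟩
  intro A hA B hB hAB
  -- notation
  set Kc : ℝ≥0∞ := (ℬ.K : ℝ≥0∞) with hKc
  set ηc : ℝ≥0∞ := (η : ℝ≥0∞) with hηc
  set Cc : ℝ≥0∞ := (C : ℝ≥0∞) with hCc
  set c0 : ℝ≥0∞ := 2 * max ηc Kc with hc0
  -- basic coercion facts
  have hCcoe : Cc = 2 * (Kc + ηc) ^ 2 := by
    rw [hCc, hCdef]; push_cast; ring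
  have hKR : (0:ℝ) < ℬ.K := ℬ.K_pos
  have hηR : (1:ℝ) < η := hη
  have coe_le : ∀ a b : ℝ≥0, (a:ℝ) ≤ b → (a : ℝ≥0∞) ≤ (b : ℝ≥0∞) := by
    intro a b h
    exact_mod_cast h
  have hηC : ηc ≤ Cc := by
    rw [hCcoe]
    have : ηc ≤ ηc * ηc := le_mul_of_one_le_left zero_le
      (by rw [hηc]; exact_mod_cast hη.le)
    calc ηc ≤ ηc * ηc := this
      _ ≤ (Kc + ηc) ^ 2 := by
          rw [sq]
          exact mul_le_mul' le_add_self le_add_self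
      _ ≤ 2 * (Kc + ηc) ^ 2 := le_mul_of_one_le_left zero_le one_le_two
  have hKC : Kc ≤ Cc := by
    rw [hCcoe]
    have h1 : (1:ℝ≥0∞) ≤ Kc + ηc := le_trans (by
      rw [hηc]; exact_mod_cast hη.le) le_add_self
    calc Kc ≤ Kc * (Kc + ηc) := le_mul_of_one_le_right zero_le h1
      _ ≤ (Kc + ηc) * (Kc + ηc) := mul_le_mul' le_self_add le_rfl
      _ = (Kc + ηc) ^ 2 := (sq _).symm
      _ ≤ 2 * (Kc + ηc) ^ 2 := le_mul_of_one_le_left zero_le one_le_two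
  have hKc0C : Kc * c0 ≤ Cc := by
    rw [hCcoe, hc0]
    have hmax : max ηc Kc ≤ Kc + ηc := max_le le_add_self le_self_add
    calc Kc * (2 * max ηc Kc) = 2 * (Kc * max ηc Kc) := by ring
      _ ≤ 2 * ((Kc + ηc) * (Kc + ηc)) :=
          mul_le_mul' le_rfl (mul_le_mul' le_self_add hmax)
      _ = 2 * (Kc + ηc) ^ 2 := by rw [sq]
  have h2c0 : (2:ℝ≥0∞) ≤ c0 := by
    rw [hc0]
    have : (1:ℝ≥0∞) ≤ max ηc Kc := le_trans (by rw [hηc]; exact_mod_cast hη.le) (le_max_left _ _)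
    exact le_mul_of_one_le_right zero_le this
  have h2ηc0 : 2 * ηc ≤ c0 := by
    rw [hc0]; exact mul_le_mul' le_rfl (le_max_left _ _)
  have h2Kc0 : 2 * Kc ≤ c0 := by
    rw [hc0]; exact mul_le_mul' le_rfl (le_max_right _ _)
  have hKcc0 : Kc ≤ c0 := le_trans (le_mul_of_one_le_left zero_le one_le_two) h2Kc0
  -- basic measure facts
  have hμA0 : μ A ≠ 0 := (ℬ.measure_pos A hA).ne'
  have hAne : A.Nonempty := nonempty_of_measure_ne_zero hμA0
  have hμBtop : μ B ≠ ∞ := (ℬ.measure_lt_top B hB).ne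
  have hμAB : μ A ≤ μ B := measure_mono hAB
  -- the step relation
  set Rel : Set X → Set X → Prop :=
    fun P Q => Q ∈ ℬ.balls ∧ P ⊆ Q ∧ μ Q ≤ Cc * μ P with hRel
  set Reach : Set X → Prop := fun P => Relation.ReflTransGen Rel A P with hReach
  have reach_balls : ∀ P, Reach P → P ∈ ℬ.balls := by
    intro P h
    induction h with
    | refl => exact hA
    | tail _ hstep _ => exact hstep.1
  have reach_subset : ∀ P, Reach P → A ⊆ P := by
    intro P h
    induction h with
    | refl => exact subset_rfl
    | tail _ hstep ih => exact ih.trans hstep.2.1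
  -- Key claim: there is a reachable ball P with μ P ≤ 2 μ B and μ B ≤ c0 * μ P.
  have key : ∃ P, Reach P ∧ μ P ≤ 2 * μ B ∧ μ B ≤ c0 * μ P := by
    by_contra hcon
    push_neg at hcon
    -- ∀ P, Reach P → μ P ≤ 2*μ B → c0 * μ P < μ B   (push_neg turns ¬≤ into <)
    have no_good : ∀ P, Reach P → μ P ≤ 2 * μ B → ¬ μ B ≤ c0 * μ P := by
      intro P h1 h2 h3
      exact absurd h3 (not_le_of_gt (hcon P h1 h2))
    -- first, μ A ≤ μ B / 2
    have hA2 : μ A ≤ μ B / 2 := by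
      by_contra hA2
      push_neg at hA2
      have h1 : μ B < 2 * μ A := by
        rw [ENNReal.div_lt_iff (Or.inl two_ne_zero) (Or.inl ofNat_ne_top)] at hA2
        rw [mul_comm] at hA2
        exact hA2
      have h2 : μ B ≤ c0 * μ A :=
        le_trans h1.le (mul_le_mul' h2c0 le_rfl)
      exact no_good A Relation.ReflTransGen.refl (le_trans hμAB
        (le_mul_of_one_le_left zero_le one_le_two)) h2
    -- Zorn's lemma on reachable balls of measure ≤ μ B / 2
    set S : Set (Set X) := {P | Reach P ∧ μ P ≤ μ B / 2} with hS
    have hAS : A ∈ S := ⟨Relation.ReflTransGen.refl, hA2⟩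
    have hZchain : ∀ c ⊆ S, IsChain (· ⊆ ·) c → c.Nonempty →
        ∃ ub ∈ S, ∀ s ∈ c, s ⊆ ub := by
      intro c hcS hchain ⟨Q₀, hQ₀⟩
      set m : ℝ≥0∞ := sSup (μ '' c) with hm
      have hmle : m ≤ μ B / 2 := by
        apply sSup_le
        rintro _ ⟨Q, hQ, rfl⟩
        exact (hcS hQ).2
      have hm0 : m ≠ 0 := by
        have h1 : μ Q₀ ≤ m := le_sSup ⟨Q₀, hQ₀, rfl⟩
        have h2 : 0 < μ Q₀ := ℬ.measure_pos Q₀ (reach_balls Q₀ (hcS hQ₀).1)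
        exact (lt_of_lt_of_le h2 h1).ne'
      have hmtop : m ≠ ∞ := by
        refine ne_top_of_le_ne_top ?_ hmle
        exact ne_top_of_le_ne_top hμBtop ENNReal.half_le_self
      have hhalf : m / 2 < m := ENNReal.half_lt_self hm0 hmtop
      obtain ⟨_, ⟨P₀, hP₀c, rfl⟩, hP₀⟩ := lt_sSup_iff.mp hhalf
      have hP₀S := hcS hP₀c
      have hP₀balls : P₀ ∈ ℬ.balls := reach_balls P₀ hP₀S.1
      have hm2 : m < 2 * μ P₀ := by
        rw [ENNReal.div_lt_iff (Or.inl two_ne_zero) (Or.inl ofNat_ne_top)] at hP₀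
        rw [mul_comm] at hP₀
        exact hP₀
      -- the hull of P₀ contains every element of the chain
      set H : Set X := ℬ.hull P₀ with hH
      have hHballs : H ∈ ℬ.balls := ℬ.hull_mem P₀ hP₀balls
      have hsub : ∀ Q ∈ c, Q ⊆ H := by
        intro Q hQ
        have hQballs : Q ∈ ℬ.balls := reach_balls Q (hcS hQ).1
        have hQm : μ Q ≤ 2 * μ P₀ :=
          le_trans (le_sSup (show μ Q ∈ μ '' c from ⟨Q, hQ, rfl⟩)) hm2.le
        have hQP₀ : (Q ∩ P₀).Nonempty := by
          rcases hchain.total hQ hP₀c with h | h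
          · have : A ⊆ Q := reach_subset Q (hcS hQ).1
            exact ⟨hAne.choose, this hAne.choose_spec, h (this hAne.choose_spec)⟩
          · have : A ⊆ P₀ := reach_subset P₀ hP₀S.1
            exact ⟨hAne.choose, h (this hAne.choose_spec), this hAne.choose_spec⟩
        refine subset_trans ?_ (ℬ.star_subset_hull P₀ hP₀balls)
        exact subset_sUnion_of_mem
          (show Q ∈ {A | A ∈ ℬ.balls ∧ μ A ≤ 2 * μ P₀ ∧ (A ∩ P₀).Nonempty} from
            ⟨hQballs, hQm, hQP₀⟩)
      have hP₀H : P₀ ⊆ H := hsub P₀ hP₀c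
      have hμH : μ H ≤ Kc * μ P₀ := ℬ.measure_hull_le P₀ hP₀balls
      have hReachH : Reach H :=
        Relation.ReflTransGen.tail hP₀S.1
          ⟨hHballs, hP₀H, le_trans hμH (mul_le_mul' hKC le_rfl)⟩
      by_cases hHsmall : μ H ≤ μ B / 2
      · exact ⟨H, ⟨hReachH, hHsmall⟩, hsub⟩
      · exfalso
        push_neg at hHsmall
        have h1 : μ B < 2 * μ H := by
          rw [ENNReal.div_lt_iff (Or.inl two_ne_zero) (Or.inl ofNat_ne_top)] at hHsmall
          rw [mul_comm] at hHsmall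
          exact hHsmall
        have h2 : μ B ≤ c0 * μ P₀ := by
          calc μ B ≤ 2 * μ H := h1.le
            _ ≤ 2 * (Kc * μ P₀) := mul_le_mul' le_rfl hμH
            _ = (2 * Kc) * μ P₀ := by ring
            _ ≤ c0 * μ P₀ := mul_le_mul' h2Kc0 le_rfl
        exact no_good P₀ hP₀S.1
          (le_trans hP₀S.2 (le_trans ENNReal.half_le_self
            (le_mul_of_one_le_left zero_le one_le_two))) h2
    obtain ⟨M, _, hMmax⟩ := zorn_subset_nonempty S hZchain A hAS
    have hMS : M ∈ S := hMmax.1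
    have hMballs : M ∈ ℬ.balls := reach_balls M hMS.1
    have hM2B : μ M ≤ 2 * μ B :=
      le_trans hMS.2 (le_trans ENNReal.half_le_self
        (le_mul_of_one_le_left zero_le one_le_two))
    by_cases hstar : ℬ.star M = univ
    · -- hull M = univ, so μ B ≤ K μ M
      have huniv : ℬ.hull M = univ := by
        apply eq_univ_of_univ_subset
        rw [← hstar]
        exact ℬ.star_subset_hull M hMballs
      have h1 : μ B ≤ μ (ℬ.hull M) := by
        rw [huniv]; exact measure_mono (subset_univ B)
      have h2 : μ B ≤ c0 * μ M :=
        le_trans h1 (le_trans (ℬ.measure_hull_le M hMballs) (mul_le_mul' hKcc0 le_rfl))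
      exact no_good M hMS.1 hM2B h2
    · obtain ⟨M', hM'balls, hMM', hμM'⟩ := hd M hMballs hstar
      by_cases hM'small : μ M' ≤ μ B / 2
      · have hReachM' : Reach M' :=
          Relation.ReflTransGen.tail hMS.1
            ⟨hM'balls, hMM'.1, le_trans hμM' (mul_le_mul' hηC le_rfl)⟩
        have hM'S : M' ∈ S := ⟨hReachM', hM'small⟩
        have := hMmax.2 hM'S hMM'.1
        exact hMM'.2 this
      · push_neg at hM'small
        have h1 : μ B < 2 * μ M' := by
          rw [ENNReal.div_lt_iff (Or.inl two_ne_zero) (Or.inl ofNat_ne_top)] at hM'small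
          rw [mul_comm] at hM'small
          exact hM'small
        have h2 : μ B ≤ c0 * μ M := by
          calc μ B ≤ 2 * μ M' := h1.le
            _ ≤ 2 * (ηc * μ M) := mul_le_mul' le_rfl hμM'
            _ = (2 * ηc) * μ M := by ring
            _ ≤ c0 * μ M := mul_le_mul' h2ηc0 le_rfl
        exact no_good M hMS.1 hM2B h2
  -- from the key claim, build the final chain
  obtain ⟨P, hPreach, hP2B, hBc0P⟩ := key
  have hPballs : P ∈ ℬ.balls := reach_balls P hPreach
  have hPB : (P ∩ B).Nonempty := by
    have hAP : A ⊆ P := reach_subset P hPreach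
    exact ⟨hAne.choose, hAP hAne.choose_spec, hAB hAne.choose_spec⟩
  have hPhull : P ⊆ ℬ.hull B :=
    subset_trans (subset_sUnion_of_mem
      (show P ∈ {A | A ∈ ℬ.balls ∧ μ A ≤ 2 * μ B ∧ (A ∩ B).Nonempty} from
        ⟨hPballs, hP2B, hPB⟩)) (ℬ.star_subset_hull B hB)
  have hμhull : μ (ℬ.hull B) ≤ Cc * μ P := by
    calc μ (ℬ.hull B) ≤ Kc * μ B := ℬ.measure_hull_le B hB
      _ ≤ Kc * (c0 * μ P) := mul_le_mul' le_rfl hBc0P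
      _ = (Kc * c0) * μ P := by ring
      _ ≤ Cc * μ P := mul_le_mul' hKc0C le_rfl
  have hfinal : Relation.ReflTransGen Rel A (ℬ.hull B) :=
    Relation.ReflTransGen.tail hPreach ⟨ℬ.hull_mem B hB, hPhull, hμhull⟩
  obtain ⟨n, f, h0, hn, hstep⟩ := rtg_chain hfinal
  refine ⟨n, f, h0, hn, ?_, ?_⟩
  · intro k hk
    induction k with
    | zero => rw [h0]; exact hA
    | succ j ih =>
        have hj : j < n := hk
        exact (hstep j hj).1
  · intro k hk
    exact ⟨(hstep k hk).2.1, (hstep k hk).2.2⟩
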